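/- arXiv:1304.0228 — 2 statements merged into one kernel-verified Lean document; each statement's English description precedes it below -/
import Mathlib

section
/- Let f be a bijection of G_k × G_{n−k} such that both f and f⁻¹ map close pairs to close pairs. Then either there exist bijections f' : G_k → G_k and f'' : G_{n−k} → G_{n−k} with f(S,U) = (f'(S), f''(U)) for all (S,U), or there exist bijections g' : G_k → G_{n−k} and g'' : G_{n−k} → G_k with f(S,U) = (g''(U), g'(S)) for all (S,U). -/
open Module

variable (K V : Type*) [DivisionRing K] [AddCommGroup V] [Module K V]

/-- Two subspaces `P`, `T` are adjacent: `dim P = dim T = dim (P ⊓ T) + 1`. -/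
def SubAdj (P T : Submodule K V) : Prop :=
  finrank K P = finrank K T ∧ finrank K P = finrank K ↥(P ⊓ T) + 1

/-- Two subspaces are complementary. -/
def SubCompl (S U : Submodule K V) : Prop := S ⊓ U = ⊥ ∧ S ⊔ U = ⊤

/-- The set 𝒢 of pairs of complementary subspaces of dimensions `k` and `n - k`. -/
def GSet (n k : ℕ) : Set (Submodule K V × Submodule K V) :=
  {p | finrank K p.1 = k ∧ finrank K p.2 = n - k ∧ SubCompl K V p.1 p.2}

/-- Adjacency of pairs. -/
def PairAdj (p q : Submodule K V × Submodule K V) : Prop :=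
  (p.1 = q.1 ∧ SubAdj K V p.2 q.2) ∨ (SubAdj K V p.1 q.1 ∧ p.2 = q.2)

/-- Closeness of pairs. -/
def PairClose (p q : Submodule K V × Submodule K V) : Prop :=
  (p.1 = q.1 ∧ p.2 ≠ q.2) ∨ (p.1 ≠ q.1 ∧ p.2 = q.2)

/-- The Grassmannian of `i`-dimensional subspaces of `V`. -/
abbrev Grass (i : ℕ) := {S : Submodule K V // finrank K S = i}

/-- In a space of dimension `n ≥ 2`, there are two distinct subspaces of
dimension `i` for `1 ≤ i ≤ n - 1`. -/
private lemma grass_two_aux {K V : Type*} [DivisionRing K] [AddCommGroup V] [Module K V]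
    [FiniteDimensional K V] {n i : ℕ} (hV : finrank K V = n)
    (hi1 : 1 ≤ i) (hi2 : i ≤ n - 1) (hn : 2 ≤ n) :
    ∃ S T : Submodule K V, finrank K S = i ∧ finrank K T = i ∧ S ≠ T := by
  have b : Basis (Fin n) K V := Module.finBasisOfFinrankEq K V hV
  have hiltn : i < n := by omega
  set e1 : Fin i → Fin n := fun j => ⟨j.1, by omega⟩ with he1
  set e2 : Fin i → Fin n := fun j => ⟨j.1 + 1, by have := j.2; omega⟩ with he2
  have hinj1 : Function.Injective e1 := by
    intro x y h
    exact Fin.ext (by simpa [he1] using congrArg Fin.val h)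
  have hinj2 : Function.Injective e2 := by
    intro x y h
    exact Fin.ext (by simpa [he2] using congrArg Fin.val h)
  have li1 : LinearIndependent K (b ∘ e1) := b.linearIndependent.comp e1 hinj1
  have li2 : LinearIndependent K (b ∘ e2) := b.linearIndependent.comp e2 hinj2
  refine ⟨Submodule.span K (Set.range (b ∘ e1)), Submodule.span K (Set.range (b ∘ e2)),
    ?_, ?_, ?_⟩
  · rw [finrank_span_eq_card li1, Fintype.card_fin]
  · rw [finrank_span_eq_card li2, Fintype.card_fin]
  · intro hST
    set z : Fin n := ⟨0, by omega⟩ with hzdef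
    have hz : z = e1 ⟨0, by omega⟩ := by simp [he1, hzdef]
    have hmem : b z ∈ Submodule.span K (Set.range (b ∘ e1)) :=
      Submodule.subset_span ⟨⟨0, by omega⟩, by rw [hz]; rfl⟩
    have hsub : Set.range (b ∘ e2) ⊆ b '' {j : Fin n | j ≠ z} := by
      rintro x ⟨j, rfl⟩
      exact ⟨e2 j, by simp [he2, hzdef, Fin.ext_iff], rfl⟩
    have hnmem : b z ∉ Submodule.span K (Set.range (b ∘ e2)) := fun hx =>
      b.linearIndependent.notMem_span_image (s := {j : Fin n | j ≠ z}) (by simp)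
        (Submodule.span_mono hsub hx)
    rw [hST] at hmem
    exact hnmem hmem

/-- Row dichotomy for closeness-preserving maps. -/
private lemma rowDich {A B A' B' : Type*} (f : A × B → A' × B')
    (hc : ∀ p q : A × B,
      ((p.1 = q.1 ∧ p.2 ≠ q.2) ∨ (p.1 ≠ q.1 ∧ p.2 = q.2)) →
      (((f p).1 = (f q).1 ∧ (f p).2 ≠ (f q).2) ∨
       ((f p).1 ≠ (f q).1 ∧ (f p).2 = (f q).2))) (a : A) :
    (∀ b b', (f (a, b)).1 = (f (a, b')).1) ∨ (∀ b b', (f (a, b)).2 = (f (a, b')).2) := by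
  by_cases h : ∀ b b', (f (a, b)).1 = (f (a, b')).1
  · exact Or.inl h
  right
  push_neg at h
  obtain ⟨b₁, b₂, hne⟩ := h
  have hb12 : b₁ ≠ b₂ := fun h => hne (by rw [h])
  have h12 := hc (a, b₁) (a, b₂) (Or.inl ⟨rfl, hb12⟩)
  have hsec : (f (a, b₁)).2 = (f (a, b₂)).2 := by
    rcases h12 with ⟨h1, _⟩ | ⟨_, h2⟩
    · exact absurd h1 hne
    · exact h2
  have key : ∀ b, (f (a, b)).2 = (f (a, b₁)).2 := by
    intro b
    by_cases e1 : b = b₁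
    · rw [e1]
    by_cases e2 : b = b₂
    · rw [e2, hsec]
    have hp := hc (a, b) (a, b₁) (Or.inl ⟨rfl, e1⟩)
    have hq := hc (a, b) (a, b₂) (Or.inl ⟨rfl, e2⟩)
    rcases hp with ⟨h1, h2⟩ | ⟨_, h2⟩
    · rcases hq with ⟨h1', _⟩ | ⟨_, h2'⟩
      · exact absurd (h1.symm.trans h1') hne
      · exact absurd (h2'.trans hsec.symm) h2
    · exact h2
  intro b b'
  rw [key b, key b']

/-- The abstract structure theorem for closeness-preserving bijections of a product. -/
private lemma product_structure {A B : Type*} (a₀ a₁ : A) (ha : a₀ ≠ a₁)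
    (b₀ b₁ : B) (hb : b₀ ≠ b₁)
    (f : A × B → A × B) (hf : Function.Bijective f)
    (hclose : ∀ p q : A × B,
      ((p.1 = q.1 ∧ p.2 ≠ q.2) ∨ (p.1 ≠ q.1 ∧ p.2 = q.2)) ↔
      (((f p).1 = (f q).1 ∧ (f p).2 ≠ (f q).2) ∨
       ((f p).1 ≠ (f q).1 ∧ (f p).2 = (f q).2))) :
    (∃ (f' : A → A) (f'' : B → B),
        Function.Bijective f' ∧ Function.Bijective f'' ∧
        ∀ p, f p = (f' p.1, f'' p.2)) ∨
    (∃ (g' : A → B) (g'' : B → A),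
        Function.Bijective g' ∧ Function.Bijective g'' ∧
        ∀ p, f p = (g'' p.2, g' p.1)) := by
  have hc : ∀ p q : A × B,
      ((p.1 = q.1 ∧ p.2 ≠ q.2) ∨ (p.1 ≠ q.1 ∧ p.2 = q.2)) →
      (((f p).1 = (f q).1 ∧ (f p).2 ≠ (f q).2) ∨
       ((f p).1 ≠ (f q).1 ∧ (f p).2 = (f q).2)) := fun p q => (hclose p q).1
  -- row dichotomy
  have hrow := rowDich f hc
  -- column dichotomy, via the swapped map
  have hcol : ∀ b : B, (∀ a a', (f (a, b)).1 = (f (a', b)).1) ∨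
      (∀ a a', (f (a, b)).2 = (f (a', b)).2) := by
    intro b
    have := rowDich (f := fun p : B × A => ((f (p.2, p.1)).2, (f (p.2, p.1)).1))
      (fun p q hpq => by
        have := hc (p.2, p.1) (q.2, q.1) (by tauto)
        tauto) b
    rcases this with h | h
    · right; intro a a'; exact h a a'
    · left; intro a a'; exact h a a'
  -- incompatibilities
  have hR1C1 : ∀ a b, (∀ b' b'', (f (a, b')).1 = (f (a, b'')).1) →
      (∀ a' a'', (f (a', b)).1 = (f (a'', b)).1) → False := by
    intro a b hR hC
    obtain ⟨a', ha'⟩ : ∃ a', a' ≠ a := by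
      rcases eq_or_ne a a₀ with rfl | h
      · exact ⟨a₁, ha.symm⟩
      · exact ⟨a₀, fun hh => h hh.symm⟩
    obtain ⟨b', hb'⟩ : ∃ b', b' ≠ b := by
      rcases eq_or_ne b b₀ with rfl | h
      · exact ⟨b₁, hb.symm⟩
      · exact ⟨b₀, fun hh => h hh.symm⟩
    have h1 : (f (a', b)).1 = (f (a, b')).1 := (hC a' a).trans (hR b b')
    have hnc' : ¬ ((((a', b) : A × B).1 = ((a, b') : A × B).1 ∧ ((a', b) : A × B).2 ≠ (a, b').2) ∨
        (((a', b) : A × B).1 ≠ (a, b').1 ∧ ((a', b) : A × B).2 = (a, b').2)) := by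
      rintro (⟨h1', _⟩ | ⟨_, h2'⟩)
      · exact ha' h1'
      · exact hb' h2'.symm
    have hni := (hclose (a', b) (a, b')).not.1 hnc'
    have h2 : (f (a', b)).2 = (f (a, b')).2 := by
      by_contra hne2
      exact hni (Or.inl ⟨h1, hne2⟩)
    have : f (a', b) = f (a, b') := Prod.ext h1 h2
    have := hf.1 this
    exact ha' (congrArg Prod.fst this)
  have hR2C2 : ∀ a b, (∀ b' b'', (f (a, b')).2 = (f (a, b'')).2) →
      (∀ a' a'', (f (a', b)).2 = (f (a'', b)).2) → False := by
    intro a b hR hC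
    obtain ⟨a', ha'⟩ : ∃ a', a' ≠ a := by
      rcases eq_or_ne a a₀ with rfl | h
      · exact ⟨a₁, ha.symm⟩
      · exact ⟨a₀, fun hh => h hh.symm⟩
    obtain ⟨b', hb'⟩ : ∃ b', b' ≠ b := by
      rcases eq_or_ne b b₀ with rfl | h
      · exact ⟨b₁, hb.symm⟩
      · exact ⟨b₀, fun hh => h hh.symm⟩
    have h2 : (f (a', b)).2 = (f (a, b')).2 := (hC a' a).trans (hR b b')
    have hnc' : ¬ ((((a', b) : A × B).1 = ((a, b') : A × B).1 ∧ ((a', b) : A × B).2 ≠ (a, b').2) ∨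
        (((a', b) : A × B).1 ≠ (a, b').1 ∧ ((a', b) : A × B).2 = (a, b').2)) := by
      rintro (⟨h1', _⟩ | ⟨_, h2'⟩)
      · exact ha' h1'
      · exact hb' h2'.symm
    have hni := (hclose (a', b) (a, b')).not.1 hnc'
    have h1 : (f (a', b)).1 = (f (a, b')).1 := by
      by_contra hne1
      exact hni (Or.inr ⟨hne1, h2⟩)
    have : f (a', b) = f (a, b') := Prod.ext h1 h2
    have := hf.1 this
    exact ha' (congrArg Prod.fst this)
  by_cases hR : ∀ b b', (f (a₀, b)).1 = (f (a₀, b')).1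
  · -- all rows constant first coord, all columns constant second coord
    have hC2 : ∀ b, ∀ a a', (f (a, b)).2 = (f (a', b)).2 := by
      intro b
      rcases hcol b with h | h
      · exact absurd h (fun h => hR1C1 a₀ b hR h)
      · exact h
    have hR1 : ∀ a, ∀ b b', (f (a, b)).1 = (f (a, b')).1 := by
      intro a
      rcases hrow a with h | h
      · exact h
      · exact absurd h (fun h => hR2C2 a b₀ h (hC2 b₀))
    left
    refine ⟨fun a => (f (a, b₀)).1, fun b => (f (a₀, b)).2, ?_, ?_, ?_⟩
    · constructor
      · intro a a' hne
        have h1 : f (a, b₀) = f (a', b₀) :=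
          Prod.ext hne (hC2 b₀ a a')
        exact congrArg Prod.fst (hf.1 h1)
      · intro x
        obtain ⟨p, hp⟩ := hf.2 (x, (f (a₀, b₀)).2)
        refine ⟨p.1, ?_⟩
        show (f (p.1, b₀)).1 = x
        calc (f (p.1, b₀)).1 = (f (p.1, p.2)).1 := hR1 p.1 b₀ p.2
          _ = (f p).1 := by rw [Prod.mk.eta]
          _ = x := by rw [hp]
    · constructor
      · intro b b' hne
        have h1 : f (a₀, b) = f (a₀, b') :=
          Prod.ext (hR1 a₀ b b') hne
        exact congrArg Prod.snd (hf.1 h1)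
      · intro y
        obtain ⟨p, hp⟩ := hf.2 ((f (a₀, b₀)).1, y)
        refine ⟨p.2, ?_⟩
        show (f (a₀, p.2)).2 = y
        calc (f (a₀, p.2)).2 = (f (p.1, p.2)).2 := hC2 p.2 a₀ p.1
          _ = (f p).2 := by rw [Prod.mk.eta]
          _ = y := by rw [hp]
    · rintro ⟨a, b⟩
      exact Prod.ext (hR1 a b b₀) (hC2 b a a₀)
  · -- swapped case
    have hR2a₀ : ∀ b b', (f (a₀, b)).2 = (f (a₀, b')).2 := by
      rcases hrow a₀ with h | h
      · exact absurd h hR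
      · exact h
    have hC1 : ∀ b, ∀ a a', (f (a, b)).1 = (f (a', b)).1 := by
      intro b
      rcases hcol b with h | h
      · exact h
      · exact absurd h (fun h => hR2C2 a₀ b hR2a₀ h)
    have hR2 : ∀ a, ∀ b b', (f (a, b)).2 = (f (a, b')).2 := by
      intro a
      rcases hrow a with h | h
      · exact absurd h (fun h => hR1C1 a b₀ h (hC1 b₀))
      · exact h
    right
    refine ⟨fun a => (f (a, b₀)).2, fun b => (f (a₀, b)).1, ?_, ?_, ?_⟩
    · constructor
      · intro a a' hne
        have h1 : f (a, b₀) = f (a', b₀) :=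
          Prod.ext (hC1 b₀ a a') hne
        exact congrArg Prod.fst (hf.1 h1)
      · intro y
        obtain ⟨p, hp⟩ := hf.2 ((f (a₀, b₀)).1, y)
        refine ⟨p.1, ?_⟩
        show (f (p.1, b₀)).2 = y
        calc (f (p.1, b₀)).2 = (f (p.1, p.2)).2 := hR2 p.1 b₀ p.2
          _ = (f p).2 := by rw [Prod.mk.eta]
          _ = y := by rw [hp]
    · constructor
      · intro b b' hne
        have h1 : f (a₀, b) = f (a₀, b') :=
          Prod.ext hne (hR2a₀ b b')
        exact congrArg Prod.snd (hf.1 h1)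
      · intro x
        obtain ⟨p, hp⟩ := hf.2 (x, (f (a₀, b₀)).2)
        refine ⟨p.2, ?_⟩
        show (f (a₀, p.2)).1 = x
        calc (f (a₀, p.2)).1 = (f (p.1, p.2)).1 := hC1 p.2 a₀ p.1
          _ = (f p).1 := by rw [Prod.mk.eta]
          _ = x := by rw [hp]
    · rintro ⟨a, b⟩
      exact Prod.ext (hC1 b a a₀) (hR2 a b b₀)

/-- Every closeness preserving transformation of the full product 𝒢_k × 𝒢_{n-k}
is of the form `f' × f''` or `g' ⋈ g''` for bijections. -/
theorem closeness_preserving_on_product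
    {K V : Type*} [DivisionRing K] [AddCommGroup V] [Module K V]
    [FiniteDimensional K V] {n k : ℕ} (hn : 2 ≤ n) (hV : finrank K V = n)
    (hk1 : 1 ≤ k) (hk2 : k ≤ n - 1)
    (f : Grass K V k × Grass K V (n - k) → Grass K V k × Grass K V (n - k))
    (hf : Function.Bijective f)
    (hclose : ∀ p q : Grass K V k × Grass K V (n - k),
      ((p.1 = q.1 ∧ p.2 ≠ q.2) ∨ (p.1 ≠ q.1 ∧ p.2 = q.2)) ↔
      (((f p).1 = (f q).1 ∧ (f p).2 ≠ (f q).2) ∨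
       ((f p).1 ≠ (f q).1 ∧ (f p).2 = (f q).2))) :
    (∃ (f' : Grass K V k → Grass K V k)
       (f'' : Grass K V (n - k) → Grass K V (n - k)),
        Function.Bijective f' ∧ Function.Bijective f'' ∧
        ∀ p, f p = (f' p.1, f'' p.2)) ∨
    (∃ (g' : Grass K V k → Grass K V (n - k))
       (g'' : Grass K V (n - k) → Grass K V k),
        Function.Bijective g' ∧ Function.Bijective g'' ∧
        ∀ p, f p = (g'' p.2, g' p.1)) := by
  have hk1' : 1 ≤ n - k := by omega
  have hk2' : n - k ≤ n - 1 := by omega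
  obtain ⟨S₁, S₂, hS₁, hS₂, hSne⟩ := grass_two_aux hV hk1 hk2 hn
  obtain ⟨T₁, T₂, hT₁, hT₂, hTne⟩ := grass_two_aux hV hk1' hk2' hn
  exact product_structure (⟨S₁, hS₁⟩ : Grass K V k) ⟨S₂, hS₂⟩
    (fun h => hSne (congrArg Subtype.val h)) (⟨T₁, hT₁⟩ : Grass K V (n - k)) ⟨T₂, hT₂⟩
    (fun h => hTne (congrArg Subtype.val h)) f hf hclose
end

section
/- Let 1 < k < n−1, let S be a k-dimensional subspace and let U, U' be adjacent (n−k)-dimensional subspaces of V. Then the double perp of the two-element set {(S,U), (S,U')} in G_k × G_{n−k} equals {(S,Y) : Y ∈ G_{n−k}, U ∩ U' ⊆ Y ⊆ U + U'}. -/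
open Module

variable (K V : Type*) [DivisionRing K] [AddCommGroup V] [Module K V]

/-- Adjacency on the product 𝒢_k × 𝒢_{n-k}. -/
def ProdAdj (n k : ℕ) (p q : Grass K V k × Grass K V (n - k)) : Prop :=
  (p.1 = q.1 ∧ SubAdj K V p.2.val q.2.val) ∨
  (SubAdj K V p.1.val q.1.val ∧ p.2 = q.2)

/-- The perp of a subset of 𝒢_k × 𝒢_{n-k}: all pairs equal or adjacent to every
element of the set. -/
def perpSet (n k : ℕ) (M : Set (Grass K V k × Grass K V (n - k))) :
    Set (Grass K V k × Grass K V (n - k)) :=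
  {p | ∀ q ∈ M, p = q ∨ ProdAdj K V n k p q}

section Helpers

variable {K V : Type*} [DivisionRing K] [AddCommGroup V] [Module K V] [FiniteDimensional K V]

lemma subAdj_symm' {P T : Submodule K V} (h : SubAdj K V P T) : SubAdj K V T P := by
  obtain ⟨h1, h2⟩ := h
  refine ⟨h1.symm, ?_⟩
  have e : T ⊓ P = P ⊓ T := inf_comm T P
  rw [e, ← h2]
  exact h1.symm

lemma subAdj_of_ne {Y W : Submodule K V} {m : ℕ}
    (hY : finrank K Y = m) (hW : finrank K W = m) (hne : Y ≠ W)
    (hint : m ≤ finrank K ↥(Y ⊓ W) + 1) : SubAdj K V Y W := by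
  have hlt : Y ⊓ W < Y := by
    rcases lt_or_eq_of_le (inf_le_left : Y ⊓ W ≤ Y) with h | h
    · exact h
    · exfalso
      apply hne
      have hle : Y ≤ W := by rw [← h]; exact inf_le_right
      exact Submodule.eq_of_le_of_finrank_eq hle (hY.trans hW.symm)
  have hlt2 := Submodule.finrank_lt_finrank_of_lt hlt
  exact ⟨hY.trans hW.symm, by omega⟩

lemma finrank_inf_ge' {Y W B : Submodule K V} (hY : Y ≤ B) (hW : W ≤ B) :
    finrank K Y + finrank K W ≤ finrank K ↥(Y ⊓ W) + finrank K B := by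
  have h1 := Submodule.finrank_sup_add_finrank_inf_eq Y W
  have h2 : finrank K ↥(Y ⊔ W) ≤ finrank K B := Submodule.finrank_mono (sup_le hY hW)
  omega

lemma exists_hyperplane_avoiding (B : Submodule K V) {v : V} (hv : v ∈ B) (hv0 : v ≠ 0) :
    ∃ W : Submodule K V, W ≤ B ∧ finrank K W + 1 = finrank K B ∧ v ∉ W := by
  obtain ⟨W', hc⟩ := Submodule.exists_isCompl (Submodule.span K {(⟨v, hv⟩ : ↥B)})
  refine ⟨W'.map B.subtype, Submodule.map_subtype_le _ _, ?_, ?_⟩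
  · have h1 : finrank K ↥(Submodule.span K {(⟨v, hv⟩ : ↥B)}) + finrank K W' = finrank K ↥B :=
      Submodule.finrank_add_eq_of_isCompl hc
    have h2 : finrank K ↥(Submodule.span K {(⟨v, hv⟩ : ↥B)}) = 1 :=
      finrank_span_singleton (by simp [Subtype.ext_iff, hv0])
    rw [Submodule.finrank_map_subtype_eq]
    omega
  · intro hmem
    obtain ⟨w, hw, hweq⟩ := Submodule.mem_map.mp hmem
    have hwv : w = ⟨v, hv⟩ := Subtype.ext hweq
    subst hwv
    have hmem2 : (⟨v, hv⟩ : ↥B) ∈ Submodule.span K {(⟨v, hv⟩ : ↥B)} ⊓ W' :=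
      ⟨Submodule.mem_span_singleton_self _, hw⟩
    rw [hc.inf_eq_bot] at hmem2
    exact hv0 (by simpa [Subtype.ext_iff] using hmem2)

lemma star_or_top {U U' W : Submodule K V} {m : ℕ}
    (hU : finrank K U = m) (hU' : finrank K U' = m) (hW : finrank K W = m)
    (hD : finrank K ↥(U ⊓ U') + 1 = m)
    (h1 : W = U ∨ SubAdj K V W U) (h2 : W = U' ∨ SubAdj K V W U') :
    U ⊓ U' ≤ W ∨ W ≤ U ⊔ U' := by
  rcases h1 with rfl | h1
  · exact Or.inl inf_le_left
  rcases h2 with rfl | h2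
  · exact Or.inl inf_le_right
  have e1 : finrank K ↥(W ⊓ U) + 1 = m := by
    have := h1.2; rw [hW] at this; omega
  have e2 : finrank K ↥(W ⊓ U') + 1 = m := by
    have := h2.2; rw [hW] at this; omega
  by_cases heq : W ⊓ U = W ⊓ U'
  · left
    have hle : W ⊓ U ≤ U ⊓ U' := le_inf inf_le_right (heq ▸ inf_le_right)
    have := Submodule.eq_of_le_of_finrank_eq hle (by omega)
    rw [← this]
    exact inf_le_left
  · right
    have hssub : W ⊓ U < (W ⊓ U) ⊔ (W ⊓ U') := by
      rcases lt_or_eq_of_le (le_sup_left : W ⊓ U ≤ (W ⊓ U) ⊔ (W ⊓ U')) with h | h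
      · exact h
      · exfalso
        apply heq
        have hle : W ⊓ U' ≤ W ⊓ U := by rw [h]; exact le_sup_right
        exact (Submodule.eq_of_le_of_finrank_eq hle (by omega)).symm
    have hrk := Submodule.finrank_lt_finrank_of_lt hssub
    have hle : (W ⊓ U) ⊔ (W ⊓ U') ≤ W := sup_le inf_le_left inf_le_left
    have hrk2 : finrank K ↥((W ⊓ U) ⊔ (W ⊓ U')) ≤ m := hW ▸ Submodule.finrank_mono hle
    have heqW : (W ⊓ U) ⊔ (W ⊓ U') = W :=
      Submodule.eq_of_le_of_finrank_eq hle (by omega)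
    rw [← heqW]
    exact sup_le (inf_le_right.trans le_sup_left) (inf_le_right.trans le_sup_right)

end Helpers

/-- For `1 < k < n - 1`, the double perp of `{(S,U), (S,U')}`, where `U ~ U'`,
is the line `{(S,Y) : U ⊓ U' ≤ Y ≤ U ⊔ U'}`. -/
theorem double_perp_eq_line
    {K V : Type*} [DivisionRing K] [AddCommGroup V] [Module K V]
    [FiniteDimensional K V] {n k : ℕ} (hV : finrank K V = n)
    (hk1 : 1 < k) (hk2 : k < n - 1)
    (S : Submodule K V) (hS : finrank K S = k)
    (U U' : Submodule K V) (hU : finrank K U = n - k) (hU' : finrank K U' = n - k)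
    (hUU' : SubAdj K V U U') :
    perpSet K V n k (perpSet K V n k
        {(⟨S, hS⟩, ⟨U, hU⟩), (⟨S, hS⟩, ⟨U', hU'⟩)}) =
      {p : Grass K V k × Grass K V (n - k) |
        p.1.val = S ∧ U ⊓ U' ≤ p.2.val ∧ p.2.val ≤ U ⊔ U'} := by
  have hnk : k + 2 ≤ n := by omega
  have hm2 : 2 ≤ n - k := by omega
  have hD : finrank K ↥(U ⊓ U') + 1 = n - k := by
    have := hUU'.2; rw [hU] at this; omega
  have hB : finrank K ↥(U ⊔ U') = n - k + 1 := by
    have := Submodule.finrank_sup_add_finrank_inf_eq U U'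
    rw [hU, hU'] at this; omega
  have hUne : U ≠ U' := by
    intro h
    have h2 := hUU'.2
    rw [← h, inf_idem] at h2
    omega
  -- every element of the perp of {(S,U),(S,U')} has first coordinate S and second
  -- coordinate equal or adjacent to both U and U'
  have hperp : ∀ q ∈ perpSet K V n k
      ({(⟨S, hS⟩, ⟨U, hU⟩), (⟨S, hS⟩, ⟨U', hU'⟩)} :
        Set (Grass K V k × Grass K V (n - k))),
      q.1.val = S ∧ (q.2.val = U ∨ SubAdj K V q.2.val U) ∧
        (q.2.val = U' ∨ SubAdj K V q.2.val U') := by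
    rintro ⟨⟨T', hT'⟩, ⟨W, hW⟩⟩ hq
    have h1 := hq _ (Set.mem_insert _ _)
    have h2 := hq (⟨S, hS⟩, ⟨U', hU'⟩) (Set.mem_insert_of_mem _ rfl)
    simp only [ProdAdj, Prod.mk.injEq, Subtype.mk.injEq, Prod.ext_iff,
      Subtype.ext_iff] at h1 h2
    refine ⟨?_, ?_, ?_⟩
    · rcases h1 with ⟨h, _⟩ | ⟨h, _⟩ | ⟨_, hWU⟩
      · exact h
      · exact h
      · rcases h2 with ⟨h, _⟩ | ⟨h, _⟩ | ⟨_, hWU'⟩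
        · exact h
        · exact h
        · exact absurd (hWU.symm.trans hWU') hUne
    · rcases h1 with ⟨_, h⟩ | ⟨_, h⟩ | ⟨_, h⟩
      exacts [Or.inl h, Or.inr h, Or.inl h]
    · rcases h2 with ⟨_, h⟩ | ⟨_, h⟩ | ⟨_, h⟩
      exacts [Or.inl h, Or.inr h, Or.inl h]
  ext p
  obtain ⟨⟨T, hT⟩, ⟨Y, hY⟩⟩ := p
  simp only [Set.mem_setOf_eq]
  constructor
  · -- double perp ⊆ line
    intro h
    -- (S,U) and (S,U') are in the perp
    have haM : ((⟨S, hS⟩, ⟨U, hU⟩) : Grass K V k × Grass K V (n - k)) ∈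
        perpSet K V n k {(⟨S, hS⟩, ⟨U, hU⟩), (⟨S, hS⟩, ⟨U', hU'⟩)} := by
      rintro r hr
      simp only [Set.mem_insert_iff, Set.mem_singleton_iff] at hr
      rcases hr with rfl | rfl
      · exact Or.inl rfl
      · exact Or.inr (Or.inl ⟨rfl, hUU'⟩)
    have hbM : ((⟨S, hS⟩, ⟨U', hU'⟩) : Grass K V k × Grass K V (n - k)) ∈
        perpSet K V n k {(⟨S, hS⟩, ⟨U, hU⟩), (⟨S, hS⟩, ⟨U', hU'⟩)} := by
      rintro r hr
      simp only [Set.mem_insert_iff, Set.mem_singleton_iff] at hr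
      rcases hr with rfl | rfl
      · exact Or.inr (Or.inl ⟨rfl, subAdj_symm' hUU'⟩)
      · exact Or.inl rfl
    have h1 := h _ haM
    have h2 := h _ hbM
    simp only [ProdAdj, Prod.mk.injEq, Subtype.mk.injEq, Prod.ext_iff,
      Subtype.ext_iff] at h1 h2
    have hTS : T = S := by
      rcases h1 with ⟨ht, _⟩ | ⟨ht, _⟩ | ⟨_, hYU⟩
      · exact ht
      · exact ht
      · rcases h2 with ⟨ht, _⟩ | ⟨ht, _⟩ | ⟨_, hYU'⟩
        · exact ht
        · exact ht
        · exact absurd (hYU.symm.trans hYU') hUne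
    have hYU : Y = U ∨ SubAdj K V Y U := by
      rcases h1 with ⟨_, hh⟩ | ⟨_, hh⟩ | ⟨_, hh⟩
      exacts [Or.inl hh, Or.inr hh, Or.inl hh]
    have hYU' : Y = U' ∨ SubAdj K V Y U' := by
      rcases h2 with ⟨_, hh⟩ | ⟨_, hh⟩ | ⟨_, hh⟩
      exacts [Or.inl hh, Or.inr hh, Or.inl hh]
    have hstar := star_or_top hU hU' hY hD hYU hYU'
    -- show Y ≤ U ⊔ U'
    have hY_B : Y ≤ U ⊔ U' := by
      by_contra hnB
      have hDY : U ⊓ U' ≤ Y := hstar.resolve_right hnB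
      have hDbot : (U ⊓ U' : Submodule K V) ≠ ⊥ := by
        intro hbot
        rw [hbot, finrank_bot] at hD
        omega
      obtain ⟨v, hvD, hv0⟩ := Submodule.exists_mem_ne_zero_of_ne_bot hDbot
      have hvB : v ∈ U ⊔ U' := Submodule.mem_sup_left (Submodule.mem_inf.mp hvD).1
      obtain ⟨W, hWB, hWrank, hvW⟩ := exists_hyperplane_avoiding (U ⊔ U') hvB hv0
      have hWm : finrank K W = n - k := by rw [hB] at hWrank; omega
      have hWperp : ((⟨S, hS⟩, ⟨W, hWm⟩) : Grass K V k × Grass K V (n - k)) ∈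
          perpSet K V n k {(⟨S, hS⟩, ⟨U, hU⟩), (⟨S, hS⟩, ⟨U', hU'⟩)} := by
        rintro r hr
        simp only [Set.mem_insert_iff, Set.mem_singleton_iff] at hr
        rcases hr with rfl | rfl
        · by_cases hWU : W = U
          · exact Or.inl (Prod.ext rfl (Subtype.ext hWU))
          · refine Or.inr (Or.inl ⟨rfl, ?_⟩)
            show SubAdj K V W U
            refine subAdj_of_ne hWm hU hWU ?_
            have := finrank_inf_ge' hWB (le_sup_left : U ≤ U ⊔ U')
            rw [hWm, hU, hB] at this
            omega
        · by_cases hWU' : W = U'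
          · exact Or.inl (Prod.ext rfl (Subtype.ext hWU'))
          · refine Or.inr (Or.inl ⟨rfl, ?_⟩)
            show SubAdj K V W U'
            refine subAdj_of_ne hWm hU' hWU' ?_
            have := finrank_inf_ge' hWB (le_sup_right : U' ≤ U ⊔ U')
            rw [hWm, hU', hB] at this
            omega
      have hYBD : Y ⊓ (U ⊔ U') = U ⊓ U' := by
        have hle : U ⊓ U' ≤ Y ⊓ (U ⊔ U') := le_inf hDY (inf_le_left.trans le_sup_left)
        have hlt : Y ⊓ (U ⊔ U') < Y := by
          rcases lt_or_eq_of_le (inf_le_left : Y ⊓ (U ⊔ U') ≤ Y) with hh | hh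
          · exact hh
          · exact absurd (by rw [← hh]; exact inf_le_right) hnB
        have h1 := Submodule.finrank_lt_finrank_of_lt hlt
        have h2 : finrank K ↥(U ⊓ U') ≤ finrank K ↥(Y ⊓ (U ⊔ U')) :=
          Submodule.finrank_mono hle
        exact (Submodule.eq_of_le_of_finrank_eq hle (by rw [hY] at h1; omega)).symm
      have hDWlt : (U ⊓ U') ⊓ W < U ⊓ U' := lt_of_le_of_ne inf_le_left (by
        intro hh
        exact hvW ((by rw [← hh]; exact inf_le_right : (U ⊓ U' : Submodule K V) ≤ W) hvD))
      have hdlt := Submodule.finrank_lt_finrank_of_lt hDWlt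
      rcases h _ hWperp with heq | hadj
      · have hYW : Y = W := congrArg (fun r => r.2.val) heq
        exact hnB (by rw [hYW]; exact hWB)
      · rcases hadj with ⟨_, hadj⟩ | ⟨_, heq2⟩
        · have hadj' : SubAdj K V Y W := hadj
          have h1 : finrank K ↥(Y ⊓ W) + 1 = n - k := by
            have := hadj'.2
            rw [hY] at this
            omega
          have h2 : Y ⊓ W ≤ (U ⊓ U') ⊓ W := by
            refine le_inf ?_ inf_le_right
            rw [← hYBD]
            exact le_inf inf_le_left (inf_le_right.trans hWB)
          have h3 := Submodule.finrank_mono h2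
          omega
        · have hYW : Y = W := congrArg Subtype.val heq2
          exact hnB (by rw [hYW]; exact hWB)
    have hD_Y : U ⊓ U' ≤ Y := by
      by_contra hnD
      have hYB : Y ≤ U ⊔ U' := hstar.resolve_left hnD
      have hBne : (U ⊔ U' : Submodule K V) ≠ ⊤ := by
        intro hh
        rw [hh, finrank_top, hV] at hB
        omega
      obtain ⟨v, hv⟩ : ∃ v, v ∉ (U ⊔ U' : Submodule K V) := by
        by_contra hc
        push_neg at hc
        exact hBne (Submodule.eq_top_iff'.mpr hc)
      have hv0 : v ≠ 0 := fun hh => hv (hh ▸ (U ⊔ U').zero_mem)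
      have hDspan : (U ⊓ U') ⊓ Submodule.span K {v} = ⊥ := by
        rw [eq_bot_iff]
        intro x hx
        obtain ⟨hxD, hxs⟩ := Submodule.mem_inf.mp hx
        obtain ⟨c, rfl⟩ := Submodule.mem_span_singleton.mp hxs
        rcases eq_or_ne c 0 with rfl | hc
        · simp
        · exfalso
          apply hv
          have hveq : v = c⁻¹ • (c • v) := by
            rw [smul_smul, inv_mul_cancel₀ hc, one_smul]
          rw [hveq]
          exact Submodule.smul_mem _ _ (Submodule.mem_sup_left hxD.1)
      have hWm : finrank K ↥((U ⊓ U') ⊔ Submodule.span K {v}) = n - k := by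
        have h1 := Submodule.finrank_sup_add_finrank_inf_eq (U ⊓ U') (Submodule.span K {v})
        rw [hDspan, finrank_bot, finrank_span_singleton hv0] at h1
        omega
      set W := (U ⊓ U') ⊔ Submodule.span K {v} with hWdef
      have hvW : v ∈ W := Submodule.mem_sup_right (Submodule.mem_span_singleton_self v)
      have hWnB : ¬ (W ≤ U ⊔ U') := fun hh => hv (hh hvW)
      have hWU : W ≠ U := fun hh => hWnB (by rw [hh]; exact le_sup_left)
      have hWU' : W ≠ U' := fun hh => hWnB (by rw [hh]; exact le_sup_right)
      have hDW : U ⊓ U' ≤ W := le_sup_left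
      have hWperp : ((⟨S, hS⟩, ⟨W, hWm⟩) : Grass K V k × Grass K V (n - k)) ∈
          perpSet K V n k {(⟨S, hS⟩, ⟨U, hU⟩), (⟨S, hS⟩, ⟨U', hU'⟩)} := by
        rintro r hr
        simp only [Set.mem_insert_iff, Set.mem_singleton_iff] at hr
        rcases hr with rfl | rfl
        · refine Or.inr (Or.inl ⟨rfl, ?_⟩)
          show SubAdj K V W U
          refine subAdj_of_ne hWm hU hWU ?_
          have : finrank K ↥(U ⊓ U') ≤ finrank K ↥(W ⊓ U) :=
            Submodule.finrank_mono (le_inf hDW inf_le_left)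
          omega
        · refine Or.inr (Or.inl ⟨rfl, ?_⟩)
          show SubAdj K V W U'
          refine subAdj_of_ne hWm hU' hWU' ?_
          have : finrank K ↥(U ⊓ U') ≤ finrank K ↥(W ⊓ U') :=
            Submodule.finrank_mono (le_inf hDW inf_le_right)
          omega
      have hWBD : W ⊓ (U ⊔ U') = U ⊓ U' := by
        have hle : U ⊓ U' ≤ W ⊓ (U ⊔ U') := le_inf hDW (inf_le_left.trans le_sup_left)
        have hlt : W ⊓ (U ⊔ U') < W := by
          rcases lt_or_eq_of_le (inf_le_left : W ⊓ (U ⊔ U') ≤ W) with hh | hh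
          · exact hh
          · exact absurd (by rw [← hh]; exact inf_le_right) hWnB
        have h1 := Submodule.finrank_lt_finrank_of_lt hlt
        have h2 : finrank K ↥(U ⊓ U') ≤ finrank K ↥(W ⊓ (U ⊔ U')) :=
          Submodule.finrank_mono hle
        exact (Submodule.eq_of_le_of_finrank_eq hle (by rw [hWm] at h1; omega)).symm
      have hYDlt : Y ⊓ (U ⊓ U') < U ⊓ U' := lt_of_le_of_ne inf_le_right (by
        intro hh
        exact hnD (by rw [← hh]; exact inf_le_left))
      have hdlt := Submodule.finrank_lt_finrank_of_lt hYDlt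
      rcases h _ hWperp with heq | hadj
      · have hYW : Y = W := congrArg (fun r => r.2.val) heq
        exact hnD (by rw [hYW]; exact hDW)
      · rcases hadj with ⟨_, hadj⟩ | ⟨_, heq2⟩
        · have hadj' : SubAdj K V Y W := hadj
          have h1 : finrank K ↥(Y ⊓ W) + 1 = n - k := by
            have := hadj'.2
            rw [hY] at this
            omega
          have h2 : Y ⊓ W ≤ Y ⊓ (U ⊓ U') := by
            refine le_inf inf_le_left ?_
            rw [← hWBD]
            exact le_inf inf_le_right (inf_le_left.trans hYB)
          have h3 := Submodule.finrank_mono h2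
          omega
        · have hYW : Y = W := congrArg Subtype.val heq2
          exact hnD (by rw [hYW]; exact hDW)
    exact ⟨hTS, hD_Y, hY_B⟩
  · -- line ⊆ double perp
    rintro ⟨hTS, hDY, hYB⟩
    intro q hq
    obtain ⟨hq1, hqU, hqU'⟩ := hperp q hq
    obtain ⟨⟨T', hT'⟩, ⟨W, hWm⟩⟩ := q
    simp only at hq1 hqU hqU' ⊢
    have hstar := star_or_top hU hU' hWm hD hqU hqU'
    by_cases hYW : Y = W
    · exact Or.inl (Prod.ext (Subtype.ext (by simp [hTS, hq1]))
        (Subtype.ext (by simpa using hYW)))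
    · refine Or.inr (Or.inl ⟨Subtype.ext (by simp [hTS, hq1]), ?_⟩)
      simp only
      rcases hstar with hDW | hWB
      · refine subAdj_of_ne hY hWm hYW ?_
        have : finrank K ↥(U ⊓ U') ≤ finrank K ↥(Y ⊓ W) :=
          Submodule.finrank_mono (le_inf hDY hDW)
        omega
      · refine subAdj_of_ne hY hWm hYW ?_
        have := finrank_inf_ge' hYB hWB
        rw [hY, hWm, hB] at this
        omega
end
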